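/- For each positive integer n, the sum over all plane forests F with n vertices of the product over all vertices v of F of (2 - 1/h_v) equals (2n+1)^(n-1)/n!, where h_v is the number of vertices in the subtree rooted at v. -/

import Mathlib

/-- A plane (ordered rooted) tree: a root together with an ordered list of
plane subtrees. -/
inductive PlaneTree where
  | node : List PlaneTree → PlaneTree

mutual
/-- Number of vertices of a plane tree. -/
def PlaneTree.size : PlaneTree → ℕ
  | .node ts => 1 + sizeList ts
/-- Total number of vertices of a list of plane trees. -/
def sizeList : List PlaneTree → ℕ
  | [] => 0
  | t :: ts => PlaneTree.size t + sizeList ts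
end

mutual
/-- The multiset of hook lengths of the vertices of a plane tree
(the hook length of a vertex is the number of vertices in the subtree
rooted at it, including itself). -/
def PlaneTree.hooks : PlaneTree → Multiset ℕ
  | .node ts => (PlaneTree.node ts).size ::ₘ hooksList ts
/-- The multiset of hook lengths of all vertices of a list of plane trees. -/
def hooksList : List PlaneTree → Multiset ℕ
  | [] => 0
  | t :: ts => PlaneTree.hooks t + hooksList ts
end

/-- A plane forest is an ordered list of plane trees; its size is the total
number of vertices. -/
def forestSize (F : List PlaneTree) : ℕ := sizeList F

/-- The multiset of hook lengths of all vertices of a plane forest. -/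
def forestHooks (F : List PlaneTree) : Multiset ℕ := hooksList F


open Polynomial Finset

noncomputable def abelP (z y : ℝ) (n : ℕ) : Polynomial ℝ :=
  C ((y + n * z) ^ n) + ∑ j ∈ Finset.range n,
    C ((n.choose (j + 1) : ℝ) * (y + ((n - 1 - j : ℕ) : ℝ) * z) ^ (n - 1 - j)) *
      (X * (X + C (((j : ℝ) + 1) * z)) ^ j)

lemma abelP_eq (z : ℝ) : ∀ n : ℕ, ∀ y : ℝ, abelP z y n = (X + C (y + n * z)) ^ n := by
  intro n
  induction n with
  | zero => intro y; simp [abelP]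
  | succ n ih =>
    intro y
    have key : derivative (abelP z y (n + 1)) =
        C ((n : ℝ) + 1) * ((abelP z y n).comp (X + C z)) := by
      rw [abelP, abelP]
      rw [derivative_add, derivative_C, zero_add, derivative_sum]
      simp only [add_comp, C_comp, Polynomial.sum_comp, mul_comp, X_comp, pow_comp, mul_add,
        Finset.mul_sum]
      rw [Finset.sum_range_succ', add_comm]
      congr 1
      · -- j = 0 term
        simp only [pow_zero, mul_one, derivative_C_mul, derivative_X]
        have : n + 1 - 1 - 0 = n := by omega
        rw [this]
        rw [← C_mul]
        congr 1
        push_cast [Nat.choose_one_right]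
        ring
      · apply Finset.sum_congr rfl
        intro i hi
        rw [Finset.mem_range] at hi
        have h1 : n + 1 - 1 - (i + 1) = n - 1 - i := by omega
        rw [h1]
        simp only [derivative_mul, derivative_C, derivative_X, derivative_X_add_C_pow,
          zero_mul, zero_add, one_mul, Nat.add_sub_cancel]
        have hc : ((n + 1).choose (i + 1 + 1) : ℝ) * ((i : ℝ) + 1 + 1) =
            ((n : ℝ) + 1) * (n.choose (i + 1) : ℝ) := by
          have := Nat.add_one_mul_choose_eq n (i + 1)
          have h2 : ((n + 1) * n.choose (i + 1) : ℕ) = ((n + 1).choose (i + 2) * (i + 2) : ℕ) := by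
            simpa [Nat.succ_eq_add_one] using this
          have h3 := congrArg (fun m : ℕ => (m : ℝ)) h2
          push_cast at h3 ⊢
          linarith
        apply Polynomial.funext
        intro x
        simp only [eval_mul, eval_add, eval_C, eval_X, eval_pow, eval_one, one_mul,
          Nat.cast_add, Nat.cast_one, Nat.add_sub_cancel]
        rw [pow_succ]
        linear_combination
          ((y + ((n - 1 - i : ℕ) : ℝ) * z) ^ (n - 1 - i) * (x + ((i : ℝ) + 1 + 1) * z) ^ i
            * (x + z)) * hc
    have keyQ : derivative ((X + C (y + ((n + 1 : ℕ) : ℝ) * z)) ^ (n + 1)) =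
        C ((n : ℝ) + 1) * ((((X + C (y + n * z)) ^ n : ℝ[X])).comp (X + C z)) := by
      rw [derivative_X_add_C_pow]
      simp only [pow_comp, add_comp, X_comp, C_comp, Nat.add_sub_cancel]
      have h1 : (y + ((n + 1 : ℕ) : ℝ) * z) = z + (y + (n : ℝ) * z) := by push_cast; ring
      rw [h1, C_add]
      push_cast
      ring
    have hder : derivative (abelP z y (n + 1) - (X + C (y + ((n + 1 : ℕ) : ℝ) * z)) ^ (n + 1)) = 0 := by
      rw [derivative_sub, key, keyQ, ih y, sub_self]
    have hc0 := eq_C_of_derivative_eq_zero hder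
    have he : (abelP z y (n + 1) - (X + C (y + ((n + 1 : ℕ) : ℝ) * z)) ^ (n + 1)).eval 0 = 0 := by
      rw [abelP]
      simp only [eval_sub, eval_add, eval_pow, eval_C, eval_finset_sum, eval_mul, eval_X,
        zero_mul, mul_zero, Finset.sum_const_zero, add_zero, zero_add, sub_self]
    rw [hc0] at he
    rw [eval_C] at he
    rw [he, map_zero] at hc0
    have := sub_eq_zero.mp hc0
    simpa using this

lemma abelR (z y x : ℝ) (n : ℕ) :
    (y + n * z) ^ n + ∑ j ∈ Finset.range n,
      (n.choose (j + 1) : ℝ) * (y + ((n - 1 - j : ℕ) : ℝ) * z) ^ (n - 1 - j) *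
        (x * (x + ((j : ℝ) + 1) * z) ^ j) = (x + (y + n * z)) ^ n := by
  have h := congrArg (Polynomial.eval x) (abelP_eq z n y)
  simpa [abelP, eval_finset_sum, mul_assoc] using h

lemma Sid (n : ℕ) :
    ∑ j ∈ Finset.range (n + 1),
      (((n + 1).choose (j + 1) : ℝ)) * (2 * (j : ℝ) + 1) ^ j *
        (2 * ((n - j : ℕ) : ℝ) + 1) ^ (n - j - 1)
      = (2 * (n : ℝ) + 3) ^ n := by
  -- Eq I
  have hI : ∑ j ∈ Finset.range (n + 1),
      (((n + 1).choose (j + 1) : ℝ)) * (2 * (j : ℝ) + 1) ^ j *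
        (2 * ((n - j : ℕ) : ℝ) + 1) ^ (n - j)
      = (2 * (n : ℝ) + 3) ^ (n + 1) - (2 * (n : ℝ) + 2) ^ (n + 1) := by
    have h := abelR 2 1 (-1) (n + 1)
    have e : ∀ j ∈ Finset.range (n + 1),
        (((n + 1).choose (j + 1) : ℝ)) * (1 + ((n + 1 - 1 - j : ℕ) : ℝ) * 2) ^ (n + 1 - 1 - j) *
          ((-1) * ((-1) + ((j : ℝ) + 1) * 2) ^ j)
        = -((((n + 1).choose (j + 1) : ℝ)) * (2 * (j : ℝ) + 1) ^ j *
            (2 * ((n - j : ℕ) : ℝ) + 1) ^ (n - j)) := by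
      intro j hj
      have h1 : n + 1 - 1 - j = n - j := by omega
      rw [h1]
      have h2 : (1 : ℝ) + ((n - j : ℕ) : ℝ) * 2 = 2 * ((n - j : ℕ) : ℝ) + 1 := by ring
      have h3 : (-1 : ℝ) + ((j : ℝ) + 1) * 2 = 2 * (j : ℝ) + 1 := by ring
      rw [h2, h3]; ring
    rw [Finset.sum_congr rfl e, Finset.sum_neg_distrib] at h
    have h4 : (1 : ℝ) + ((n + 1 : ℕ) : ℝ) * 2 = 2 * (n : ℝ) + 3 := by push_cast; ring
    have h5 : (-1 : ℝ) + ((1 : ℝ) + ((n + 1 : ℕ) : ℝ) * 2) = 2 * (n : ℝ) + 2 := by push_cast; ring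
    rw [h4] at h
    rw [show ((-1 : ℝ) + (2 * (n : ℝ) + 3)) = 2 * (n : ℝ) + 2 from by ring] at h
    linarith
  -- Eq II
  have hII : ∑ j ∈ Finset.range n,
      ((n.choose (j + 1) : ℝ)) * (2 * (j : ℝ) + 1) ^ j *
        (2 * ((n - j : ℕ) : ℝ) + 1) ^ (n - 1 - j)
      = (2 * (n : ℝ) + 3) ^ n - (2 * (n : ℝ) + 2) ^ n := by
    have h := abelR 2 3 (-1) n
    have e : ∀ j ∈ Finset.range n,
        ((n.choose (j + 1) : ℝ)) * (3 + ((n - 1 - j : ℕ) : ℝ) * 2) ^ (n - 1 - j) *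
          ((-1) * ((-1) + ((j : ℝ) + 1) * 2) ^ j)
        = -(((n.choose (j + 1) : ℝ)) * (2 * (j : ℝ) + 1) ^ j *
            (2 * ((n - j : ℕ) : ℝ) + 1) ^ (n - 1 - j)) := by
      intro j hj
      rw [Finset.mem_range] at hj
      have h1 : (n - j : ℕ) = (n - 1 - j) + 1 := by omega
      have h2 : (3 : ℝ) + ((n - 1 - j : ℕ) : ℝ) * 2 = 2 * ((n - j : ℕ) : ℝ) + 1 := by
        rw [h1]; push_cast; ring
      have h3 : (-1 : ℝ) + ((j : ℝ) + 1) * 2 = 2 * (j : ℝ) + 1 := by ring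
      rw [h2, h3]; ring
    rw [Finset.sum_congr rfl e, Finset.sum_neg_distrib] at h
    have h4 : (3 : ℝ) + (n : ℝ) * 2 = 2 * (n : ℝ) + 3 := by ring
    rw [h4] at h
    have h5 : (-1 : ℝ) + (2 * (n : ℝ) + 3) = 2 * (n : ℝ) + 2 := by ring
    rw [h5] at h
    linarith
  -- combine
  rw [Finset.sum_range_succ] at hI ⊢
  simp only [Nat.sub_self, Nat.cast_zero, Nat.zero_sub] at hI ⊢
  have hmid : ∀ j ∈ Finset.range n,
      (((n + 1).choose (j + 1) : ℝ)) * (2 * (j : ℝ) + 1) ^ j *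
        (2 * ((n - j : ℕ) : ℝ) + 1) ^ (n - j - 1)
      = (((n + 1).choose (j + 1) : ℝ)) * (2 * (j : ℝ) + 1) ^ j *
          (2 * ((n - j : ℕ) : ℝ) + 1) ^ (n - j)
        - 2 * ((n : ℝ) + 1) * (((n.choose (j + 1) : ℝ)) * (2 * (j : ℝ) + 1) ^ j *
            (2 * ((n - j : ℕ) : ℝ) + 1) ^ (n - 1 - j)) := by
    intro j hj
    rw [Finset.mem_range] at hj
    have h1 : n - 1 - j = n - j - 1 := by omega
    have h2 : n - j = (n - j - 1) + 1 := by omega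
    have hch : ((n.choose (j + 1) : ℝ)) * ((n : ℝ) + 1)
        = (((n + 1).choose (j + 1) : ℝ)) * ((n - j : ℕ) : ℝ) := by
      have := Nat.choose_mul_succ_eq n (j + 1)
      have h3 : n + 1 - (j + 1) = n - j := by omega
      rw [h3] at this
      exact_mod_cast congrArg (fun m : ℕ => (m : ℝ)) this
    rw [h1]
    have hp : (2 * ((n - j : ℕ) : ℝ) + 1) ^ (n - j)
        = (2 * ((n - j : ℕ) : ℝ) + 1) ^ (n - j - 1) * (2 * ((n - j : ℕ) : ℝ) + 1) := by
      conv_lhs => rw [h2]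
      rw [pow_succ, ← h2]
    rw [hp]
    linear_combination (2 : ℝ) * ((2 * (j : ℝ) + 1) ^ j *
      (2 * ((n - j : ℕ) : ℝ) + 1) ^ (n - j - 1)) * hch
  rw [Finset.sum_congr rfl hmid, Finset.sum_sub_distrib, ← Finset.mul_sum, hII]
  simp only [Nat.choose_self, Nat.cast_one, one_mul, pow_zero, mul_one] at hI ⊢
  rw [pow_succ (2 * (n : ℝ) + 3) n, pow_succ (2 * (n : ℝ) + 2) n] at hI
  linear_combination hI

noncomputable def gDL (n : ℕ) : ℝ := (2 * (n : ℝ) + 1) ^ (n - 1) / (Nat.factorial n : ℝ)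

lemma gDL_zero : gDL 0 = 1 := by simp [gDL]

lemma gDL_step (m : ℕ) : (2 - 1 / ((m : ℝ) + 1)) * gDL m
    = (2 * (m : ℝ) + 1) ^ m / ((m + 1).factorial : ℝ) := by
  have hm1 : ((m : ℝ) + 1) ≠ 0 := by positivity
  have hf : (Nat.factorial m : ℝ) ≠ 0 := by exact_mod_cast (Nat.factorial_pos m).ne'
  have hpow : (2 * (m : ℝ) + 1) * (2 * (m : ℝ) + 1) ^ (m - 1) = (2 * (m : ℝ) + 1) ^ m := by
    cases m with
    | zero => norm_num
    | succ s => rw [← pow_succ']; norm_num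
  rw [gDL, Nat.factorial_succ]
  push_cast
  field_simp
  linear_combination hpow

lemma gDL_rec (n : ℕ) :
    ∑ m ∈ Finset.range (n + 1), (2 - 1 / ((m : ℝ) + 1)) * gDL m * gDL (n - m) = gDL (n + 1) := by
  have hterm : ∀ m ∈ Finset.range (n + 1),
      (2 - 1 / ((m : ℝ) + 1)) * gDL m * gDL (n - m)
      = (((n + 1).choose (m + 1) : ℝ)) * (2 * (m : ℝ) + 1) ^ m *
          (2 * ((n - m : ℕ) : ℝ) + 1) ^ (n - m - 1) / ((n + 1).factorial : ℝ) := by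
    intro m hm
    rw [Finset.mem_range] at hm
    rw [gDL_step, gDL]
    have hfact : ((n + 1).choose (m + 1) * (m + 1).factorial * (n - m).factorial : ℕ)
        = (n + 1).factorial := by
      have := Nat.choose_mul_factorial_mul_factorial (show m + 1 ≤ n + 1 by omega)
      rw [show n + 1 - (m + 1) = n - m by omega] at this
      exact this
    have hfactR : (((n + 1).choose (m + 1) : ℝ)) * ((m + 1).factorial : ℝ) * ((n - m).factorial : ℝ)
        = ((n + 1).factorial : ℝ) := by exact_mod_cast congrArg (fun k : ℕ => (k : ℝ)) hfact
    have h1 : ((m + 1).factorial : ℝ) ≠ 0 := by exact_mod_cast (Nat.factorial_pos _).ne'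
    have h2 : ((n - m).factorial : ℝ) ≠ 0 := by exact_mod_cast (Nat.factorial_pos _).ne'
    have h3 : ((n + 1).factorial : ℝ) ≠ 0 := by exact_mod_cast (Nat.factorial_pos _).ne'
    field_simp
    linear_combination (-1 : ℝ) * hfactR
  rw [Finset.sum_congr rfl hterm]
  rw [← Finset.sum_div]
  rw [Sid n]
  rw [gDL]
  push_cast
  rw [show (2 * ((n : ℝ) + 1) + 1) = 2 * (n : ℝ) + 3 from by ring]


noncomputable def wF (F : List PlaneTree) : ℝ :=
  ((forestHooks F).map (fun h : ℕ => (2 : ℝ) - 1 / (h : ℝ))).prod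

lemma coe_fix (s : Multiset ℕ) : (Multiset.map (fun h => (2 : ℝ) - 1 / h) s).prod
    = (s.map (fun h : ℕ => (2 : ℝ) - 1 / (h : ℝ))).prod := by
  show (Multiset.map _ (s.bind fun a => {((a : ℕ) : ℝ)})).prod = _
  rw [Multiset.bind_singleton, Multiset.map_map]
  rfl

lemma wF_eq (F : List PlaneTree) :
    ((forestHooks F).map (fun h => (2 : ℝ) - 1 / h)).prod = wF F := coe_fix _

lemma wF_nil : wF [] = 1 := by simp [wF, forestHooks, hooksList]

lemma size_node (ts : List PlaneTree) : (PlaneTree.node ts).size = 1 + sizeList ts := by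
  rw [PlaneTree.size]

lemma forestSize_cons (t : PlaneTree) (F : List PlaneTree) :
    forestSize (t :: F) = t.size + forestSize F := by
  rw [forestSize, sizeList]; rfl

lemma wF_cons (ts F : List PlaneTree) :
    wF (PlaneTree.node ts :: F)
      = ((2 : ℝ) - 1 / ((1 + sizeList ts : ℕ) : ℝ)) * wF ts * wF F := by
  rw [wF, wF, wF, forestHooks, hooksList, PlaneTree.hooks, size_node]
  rw [Multiset.map_add, Multiset.map_cons, Multiset.prod_add, Multiset.prod_cons]
  rw [forestHooks, forestHooks]

lemma eq_nil_of_forestSize_zero {F : List PlaneTree} (h : forestSize F = 0) : F = [] := by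
  cases F with
  | nil => rfl
  | cons t F' =>
    exfalso
    cases t with
    | node ts =>
      rw [forestSize_cons, size_node] at h
      omega

def phi (k : ℕ)
    (x : Σ m : Fin (k + 1),
      {F : List PlaneTree // forestSize F = (m : ℕ)} × {F : List PlaneTree // forestSize F = k - m}) :
    {F : List PlaneTree // forestSize F = k + 1} :=
  ⟨PlaneTree.node x.2.1.1 :: x.2.2.1, by
    obtain ⟨m, ⟨ts, ht⟩, ⟨F', hF⟩⟩ := x
    have hm := m.isLt
    simp only [forestSize_cons, size_node]
    rw [forestSize] at ht hF ⊢
    omega⟩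

lemma phi_bijective (k : ℕ) : Function.Bijective (phi k) := by
  constructor
  · rintro ⟨m1, ⟨ts1, ht1⟩, ⟨F1, hF1⟩⟩ ⟨m2, ⟨ts2, ht2⟩, ⟨F2, hF2⟩⟩ h
    simp only [phi, Subtype.mk.injEq, List.cons.injEq, PlaneTree.node.injEq] at h
    obtain ⟨rfl, rfl⟩ := h
    have : m1 = m2 := Fin.ext (by rw [← ht1, ← ht2])
    subst this
    rfl
  · rintro ⟨F, hF⟩
    cases F with
    | nil => exfalso; rw [forestSize] at hF; simp [sizeList] at hF
    | cons t F' =>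
      cases t with
      | node ts =>
        have h1 : forestSize (PlaneTree.node ts :: F') = 1 + sizeList ts + sizeList F' := by
          rw [forestSize_cons, size_node]; rfl
        rw [h1] at hF
        refine ⟨⟨⟨sizeList ts, by omega⟩, ⟨ts, rfl⟩, ⟨F', ?_⟩⟩, rfl⟩
        show forestSize F' = k - sizeList ts
        rw [forestSize]; omega

lemma finite_forests : ∀ n : ℕ, Finite {F : List PlaneTree // forestSize F = n} := by
  intro n
  induction n using Nat.strong_induction_on with
  | _ n ih =>
    cases n with
    | zero =>
      haveI : Subsingleton {F : List PlaneTree // forestSize F = 0} := by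
        constructor
        rintro ⟨F1, h1⟩ ⟨F2, h2⟩
        simp [eq_nil_of_forestSize_zero h1, eq_nil_of_forestSize_zero h2]
      exact Finite.of_subsingleton
    | succ k =>
      haveI : ∀ m : Fin (k + 1),
          Finite ({F : List PlaneTree // forestSize F = (m : ℕ)} ×
            {F : List PlaneTree // forestSize F = k - m}) := by
        intro m
        haveI := ih (m : ℕ) (by omega)
        haveI := ih (k - m) (by omega)
        infer_instance
      exact Finite.of_surjective (phi k) (phi_bijective k).surjective

lemma mainT : ∀ n : ℕ, (∑' F : {F : List PlaneTree // forestSize F = n}, wF F.1) = gDL n := by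
  intro n
  induction n using Nat.strong_induction_on with
  | _ n ih =>
    cases n with
    | zero =>
      letI : Unique {F : List PlaneTree // forestSize F = 0} :=
        { default := ⟨[], rfl⟩,
          uniq := by rintro ⟨F, h⟩; exact Subtype.ext (eq_nil_of_forestSize_zero h) }
      rw [tsum_fintype, Fintype.sum_unique]
      show wF [] = gDL 0
      rw [wF_nil, gDL_zero]
    | succ k =>
      haveI fa : ∀ m : ℕ, Fintype {F : List PlaneTree // forestSize F = m} := fun m =>
        @Fintype.ofFinite _ (finite_forests m)
      rw [tsum_fintype]
      rw [← Function.Bijective.sum_comp (phi_bijective k) (fun F => wF F.1)]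
      rw [← Finset.univ_sigma_univ, Finset.sum_sigma]
      have inner : ∀ m : Fin (k + 1),
          (∑ p : {F : List PlaneTree // forestSize F = (m : ℕ)} ×
              {F : List PlaneTree // forestSize F = k - (m : ℕ)},
            wF ((phi k ⟨m, p⟩).1))
          = (2 - 1 / (((m : ℕ) : ℝ) + 1)) * gDL (m : ℕ) * gDL (k - (m : ℕ)) := by
        intro m
        rw [Fintype.sum_prod_type]
        have hterm : ∀ (a : {F : List PlaneTree // forestSize F = (m : ℕ)})
            (b : {F : List PlaneTree // forestSize F = k - (m : ℕ)}),
            wF ((phi k ⟨m, (a, b)⟩).1)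
            = (2 - 1 / (((m : ℕ) : ℝ) + 1)) * (wF a.1 * wF b.1) := by
          intro a b
          show wF (PlaneTree.node a.1 :: b.1) = _
          rw [wF_cons]
          have ha : sizeList a.1 = (m : ℕ) := a.2
          rw [ha]
          push_cast
          ring
        simp_rw [hterm, ← mul_assoc]
        rw [← Finset.sum_mul_sum, ← Finset.mul_sum]
        rw [← ih (m : ℕ) (by omega), ← ih (k - (m : ℕ)) (by omega), tsum_fintype, tsum_fintype]
      rw [Finset.sum_congr rfl (fun m _ => inner m)]
      rw [Fin.sum_univ_eq_sum_range
        (fun m => (2 - 1 / ((m : ℝ) + 1)) * gDL m * gDL (k - m)) (k + 1)]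
      exact gDL_rec k

/-- Proposition 5 (Du–Liu): hook length formula for plane forests. -/
theorem du_liu_plane_forests (n : ℕ) (hn : 1 ≤ n) :
    ∑' F : {F : List PlaneTree // forestSize F = n},
      ((forestHooks F.1).map (fun h => (2 : ℝ) - 1 / h)).prod
      = (2 * (n : ℝ) + 1) ^ (n - 1) / (Nat.factorial n : ℝ) := by
  have h1 : (∑' F : {F : List PlaneTree // forestSize F = n},
      ((forestHooks F.1).map (fun h => (2 : ℝ) - 1 / h)).prod)
      = ∑' F : {F : List PlaneTree // forestSize F = n}, wF F.1 :=
    tsum_congr (fun F => wF_eq F.1)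
  rw [h1, mainT n, gDL]
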